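/- arXiv:1809.09817 — 3 statements merged into one kernel-verified Lean document; each statement's English description precedes it below -/
import Mathlib

section
/- Let A and P be real n×n matrices such that P is symmetric positive definite and the matrix −(A·P + P·Aᵀ) is positive definite. Then every complex eigenvalue of A (i.e., every element of the spectrum of the complexification of A) has strictly negative real part. -/
open Matrix

lemma re_quad {n : ℕ} (M : Matrix (Fin n) (Fin n) ℝ) (v : Fin n → ℂ) :
    (star v ⬝ᵥ (M.map (algebraMap ℝ ℂ)) *ᵥ v).re =
      (fun i => (v i).re) ⬝ᵥ M *ᵥ (fun i => (v i).re)
        + (fun i => (v i).im) ⬝ᵥ M *ᵥ (fun i => (v i).im) := by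
  simp only [dotProduct, mulVec, map_apply, Pi.star_apply, Finset.mul_sum, Complex.re_sum]
  rw [← Finset.sum_add_distrib]
  refine Finset.sum_congr rfl fun i _ => ?_
  rw [← Finset.sum_add_distrib]
  refine Finset.sum_congr rfl fun j _ => ?_
  simp [Complex.mul_re, Complex.mul_im, RCLike.star_def]
  try ring

lemma pos_quad {n : ℕ} {M : Matrix (Fin n) (Fin n) ℝ} (hM : M.PosDef) (v : Fin n → ℂ)
    (hv : v ≠ 0) : 0 < (star v ⬝ᵥ (M.map (algebraMap ℝ ℂ)) *ᵥ v).re := by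
  rw [re_quad]
  have hxy : (fun i => (v i).re) ≠ 0 ∨ (fun i => (v i).im) ≠ 0 := by
    by_contra h
    push_neg at h
    apply hv
    funext i
    have h1 := congrFun h.1 i
    have h2 := congrFun h.2 i
    simp only [Pi.zero_apply] at h1 h2
    exact Complex.ext h1 h2
  rcases hxy with h | h
  · have h1 := hM.dotProduct_mulVec_pos h
    have h2 := hM.posSemidef.dotProduct_mulVec_nonneg (fun i => (v i).im)
    simp only [star_trivial] at h1 h2
    linarith
  · have h1 := hM.dotProduct_mulVec_pos h
    have h2 := hM.posSemidef.dotProduct_mulVec_nonneg (fun i => (v i).re)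
    simp only [star_trivial] at h1 h2
    linarith

/-- **Lyapunov stability criterion.** If `P` is symmetric positive definite and
`-(A * P + P * Aᵀ)` is positive definite, then every complex eigenvalue of `A`
(element of the spectrum of the complexification of `A`) has strictly negative real part. -/
theorem lyapunov_strict_stability {n : ℕ} (A P : Matrix (Fin n) (Fin n) ℝ)
    (hP : P.PosDef) (hAP : (-(A * P + P * Aᵀ)).PosDef) :
    ∀ μ ∈ spectrum ℂ (A.map (algebraMap ℝ ℂ)), μ.re < 0 := by
  intro μ hμ
  set c : ℝ →+* ℂ := algebraMap ℝ ℂ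
  rw [spectrum.mem_iff] at hμ
  have halg : (algebraMap ℂ (Matrix (Fin n) (Fin n) ℂ)) μ = μ • (1 : Matrix (Fin n) (Fin n) ℂ) :=
    Algebra.algebraMap_eq_smul_one μ
  have hdet : ((algebraMap ℂ (Matrix (Fin n) (Fin n) ℂ)) μ - A.map c).det = 0 := by
    by_contra h
    exact hμ ((isUnit_iff_isUnit_det _).mpr (isUnit_iff_ne_zero.mpr h))
  have hdetT : (μ • (1 : Matrix (Fin n) (Fin n) ℂ) - Aᵀ.map c).det = 0 := by
    have hT : ((algebraMap ℂ (Matrix (Fin n) (Fin n) ℂ)) μ - A.map c)ᵀ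
        = μ • (1 : Matrix (Fin n) (Fin n) ℂ) - Aᵀ.map c := by
      rw [halg, transpose_sub, transpose_smul, transpose_one, ← transpose_map]
    rw [← hT, det_transpose]
    exact hdet
  obtain ⟨v, hv, hveq⟩ := (Matrix.exists_mulVec_eq_zero_iff).mpr hdetT
  have heig : (Aᵀ.map c) *ᵥ v = μ • v := by
    rw [sub_mulVec] at hveq
    have h0 := sub_eq_zero.mp hveq
    rw [← h0, smul_mulVec, one_mulVec]
  have hconj : (Aᵀ.map ⇑c)ᴴ = A.map ⇑c := by
    ext i j
    simp [conjTranspose_apply, map_apply, Complex.star_def, c, Complex.conj_ofReal]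
  set p : ℂ := star v ⬝ᵥ (P.map c) *ᵥ v with hp
  have hkey : star v ⬝ᵥ ((A * P + P * Aᵀ).map c) *ᵥ v = (star μ + μ) * p := by
    have hsplit : (A * P + P * Aᵀ).map ⇑c = A.map ⇑c * P.map ⇑c + P.map ⇑c * Aᵀ.map ⇑c := by
      simp only [← RingHom.mapMatrix_apply, map_add, _root_.map_mul]
    rw [hsplit, add_mulVec, dotProduct_add]
    have h1 : star v ⬝ᵥ (A.map c * P.map c) *ᵥ v = star μ * p := by
      rw [← mulVec_mulVec, dotProduct_mulVec]
      have hsv : star v ᵥ* A.map c = star ((Aᵀ.map c) *ᵥ v) := by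
        rw [star_mulVec, hconj]
      rw [hsv, heig, star_smul, smul_dotProduct, smul_eq_mul]
    have h2 : star v ⬝ᵥ (P.map c * Aᵀ.map c) *ᵥ v = μ * p := by
      rw [← mulVec_mulVec, heig, mulVec_smul, dotProduct_smul, smul_eq_mul]
    rw [h1, h2]; ring
  have hsum : star μ + μ = ((2 * μ.re : ℝ) : ℂ) := by
    apply Complex.ext <;> simp [Complex.star_def] <;> ring
  have hre : (star v ⬝ᵥ ((A * P + P * Aᵀ).map c) *ᵥ v).re = 2 * μ.re * p.re := by
    rw [hkey, hsum]
    simp [Complex.mul_re]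
  have hneg : (star v ⬝ᵥ ((A * P + P * Aᵀ).map c) *ᵥ v).re < 0 := by
    have hq := pos_quad hAP v hv
    have hmap : ((-(A * P + P * Aᵀ)).map c) = -((A * P + P * Aᵀ).map c) := by
      ext i j; simp
    rw [hmap, neg_mulVec, dotProduct_neg, Complex.neg_re] at hq
    linarith
  have hppos : 0 < p.re := pos_quad hP v hv
  rw [hre] at hneg
  nlinarith
end

section
/- Let A, P, Q be real n×n matrices with P symmetric positive semidefinite, Q symmetric positive definite, and A·P + P·Aᵀ + Q ⪯ 0 (negative semidefinite). Then every complex eigenvalue of A has strictly negative real part. -/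
open Matrix


private lemma re_quad_form {n : ℕ} (R : Matrix (Fin n) (Fin n) ℝ) (w : Fin n → ℂ) :
    (star w ⬝ᵥ (R.map (algebraMap ℝ ℂ)) *ᵥ w).re
      = (fun i => (w i).re) ⬝ᵥ R *ᵥ (fun i => (w i).re)
      + (fun i => (w i).im) ⬝ᵥ R *ᵥ (fun i => (w i).im) := by
  simp only [dotProduct, mulVec, Pi.star_apply, Matrix.map_apply, Finset.mul_sum,
    Complex.re_sum, ← Finset.sum_add_distrib]
  refine Finset.sum_congr rfl fun i _ => ?_
  refine Finset.sum_congr rfl fun j _ => ?_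
  simp [Complex.mul_re, Complex.mul_im, RCLike.star_def]

private lemma map_mulVec_star {n : ℕ} (R : Matrix (Fin n) (Fin n) ℝ) (w : Fin n → ℂ) :
    (R.map (algebraMap ℝ ℂ)) *ᵥ (star w) = star ((R.map (algebraMap ℝ ℂ)) *ᵥ w) := by
  funext i
  simp only [mulVec, dotProduct, Pi.star_apply, Matrix.map_apply, RCLike.star_def, map_sum,
    _root_.map_mul, Complex.coe_algebraMap, Complex.conj_ofReal]

/-- If `P` is symmetric positive semidefinite, `Q` is symmetric positive definite, and
`A * P + P * Aᵀ + Q ⪯ 0` (negative semidefinite), then every complex eigenvalue of `A`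
has strictly negative real part. -/
theorem hurwitz_of_relaxed_lyapunov_ineq {n : ℕ} (A P Q : Matrix (Fin n) (Fin n) ℝ)
    (hP : P.PosSemidef) (hQ : Q.PosDef)
    (h : (-(A * P + P * Aᵀ + Q)).PosSemidef) :
    ∀ μ ∈ spectrum ℂ (A.map (algebraMap ℝ ℂ)), μ.re < 0 := by
  intro μ hμ
  set f := algebraMap ℝ ℂ
  set M := A.map f with hMdef
  -- obtain an eigenvector of Mᵀ
  rw [spectrum.mem_iff, Matrix.isUnit_iff_isUnit_det, isUnit_iff_ne_zero, not_not] at hμ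
  have hdet : (algebraMap ℂ (Matrix (Fin n) (Fin n) ℂ) μ - Mᵀ).det = 0 := by
    rw [← Matrix.det_transpose]
    convert hμ using 2
    simp [Matrix.transpose_sub, Matrix.algebraMap_eq_diagonal]
  obtain ⟨w, hw0, hww⟩ := (Matrix.exists_mulVec_eq_zero_iff).mpr hdet
  have heig : Mᵀ *ᵥ w = μ • w := by
    have := hww
    rw [Matrix.sub_mulVec, sub_eq_zero] at this
    rw [← this]
    funext i
    simp [Matrix.algebraMap_eq_diagonal, Matrix.mulVec_diagonal]
  -- quadratic form identities
  have hstar : Mᵀ *ᵥ (star w) = (starRingEnd ℂ μ) • star w := by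
    have h1 : Mᵀ = Aᵀ.map f := by rw [hMdef]; exact (Matrix.transpose_map).symm
    rw [h1, map_mulVec_star, ← h1, heig]
    funext i
    simp
  have key : star w ⬝ᵥ ((A * P + P * Aᵀ + Q).map f) *ᵥ w
      = (starRingEnd ℂ μ + μ) * (star w ⬝ᵥ (P.map f) *ᵥ w) + star w ⬝ᵥ (Q.map f) *ᵥ w := by
    have hmapAP : (A * P).map f = M * P.map f := by rw [hMdef]; exact Matrix.map_mul
    have hmapPA : (P * Aᵀ).map f = P.map f * Mᵀ := by
      rw [hMdef, ← Matrix.transpose_map]; exact Matrix.map_mul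
    rw [Matrix.map_add _ (map_add f), Matrix.map_add _ (map_add f), hmapAP, hmapPA]
    rw [Matrix.add_mulVec, Matrix.add_mulVec, dotProduct_add, dotProduct_add]
    have e1 : star w ⬝ᵥ (M * P.map f) *ᵥ w = (starRingEnd ℂ μ) * (star w ⬝ᵥ (P.map f) *ᵥ w) := by
      rw [← Matrix.mulVec_mulVec, Matrix.dotProduct_mulVec, ← Matrix.mulVec_transpose, hstar]
      rw [smul_dotProduct]
      exact smul_eq_mul (α := ℂ) _ _
    have e2 : star w ⬝ᵥ (P.map f * Mᵀ) *ᵥ w = μ * (star w ⬝ᵥ (P.map f) *ᵥ w) := by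
      rw [← Matrix.mulVec_mulVec, heig, Matrix.mulVec_smul, dotProduct_smul]
      exact smul_eq_mul (α := ℂ) _ _
    rw [e1, e2]
    ring
  -- take real parts
  set x : Fin n → ℝ := fun i => (w i).re with hx
  set y : Fin n → ℝ := fun i => (w i).im with hy
  have hL : (star w ⬝ᵥ ((A * P + P * Aᵀ + Q).map f) *ᵥ w).re ≤ 0 := by
    rw [re_quad_form]
    have h1 := h.dotProduct_mulVec_nonneg x
    have h2 := h.dotProduct_mulVec_nonneg y
    simp only [Matrix.neg_mulVec, dotProduct_neg, star_trivial] at h1 h2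
    linarith
  have hp : 0 ≤ (star w ⬝ᵥ (P.map f) *ᵥ w).re := by
    rw [re_quad_form]
    have h1 := hP.dotProduct_mulVec_nonneg x
    have h2 := hP.dotProduct_mulVec_nonneg y
    simp only [star_trivial] at h1 h2
    linarith
  have hq : 0 < (star w ⬝ᵥ (Q.map f) *ᵥ w).re := by
    rw [re_quad_form]
    have hxy : x ≠ 0 ∨ y ≠ 0 := by
      by_contra hc
      push_neg at hc
      apply hw0
      funext i
      have := congrFun hc.1 i
      have := congrFun hc.2 i
      simp only [hx, hy, Pi.zero_apply] at *
      exact Complex.ext (by assumption) (by assumption)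
    rcases hxy with hx0 | hy0
    · have h1 := hQ.dotProduct_mulVec_pos hx0
      have h2 := hQ.posSemidef.dotProduct_mulVec_nonneg y
      simp only [star_trivial] at h1 h2
      linarith
    · have h1 := hQ.posSemidef.dotProduct_mulVec_nonneg x
      have h2 := hQ.dotProduct_mulVec_pos hy0
      simp only [star_trivial] at h1 h2
      linarith
  have hkey := congrArg Complex.re key
  rw [Complex.add_re, Complex.mul_re] at hkey
  simp only [Complex.add_re, Complex.add_im, Complex.conj_re, Complex.conj_im] at hkey
  by_contra hc
  push_neg at hc
  nlinarith [mul_nonneg hc hp, hq, hL, hkey]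
end

section
/- Let A be a real n×n matrix all of whose complex eigenvalues have strictly negative real part, let Q be a real symmetric n×n matrix, and let P, P₀ be real symmetric n×n matrices such that A·P + P·Aᵀ + Q ⪯ 0 (negative semidefinite) and A·P₀ + P₀·Aᵀ + Q = 0. Then P − P₀ is positive semidefinite. -/
open Matrix NormedSpace Filter

attribute [local instance] Matrix.linftyOpNormedRing Matrix.linftyOpNormedAlgebra

-- scalar asymptotics
lemma aux_exp_pow {c : ℝ} (hc : c < 0) (k : ℕ) :
    Tendsto (fun t : ℝ => Real.exp (c * t) * t ^ k) atTop (nhds 0) := by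
  have h1 : Tendsto (fun t : ℝ => (-c) * t) atTop atTop :=
    Tendsto.const_mul_atTop (by linarith) tendsto_id
  have h2 := (Real.tendsto_pow_mul_exp_neg_atTop_nhds_zero k).comp h1
  have h3 : Tendsto (fun t : ℝ => ((-c) ^ k)⁻¹ * (((-c) * t) ^ k * Real.exp (-((-c) * t))))
      atTop (nhds (((-c) ^ k)⁻¹ * 0)) := h2.const_mul _
  rw [mul_zero] at h3
  refine h3.congr' (Eventually.of_forall fun t => ?_)
  have hck : (-c) ^ k ≠ 0 := pow_ne_zero _ (by linarith)
  field_simp [mul_pow]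
  ring_nf

-- mulVec as a continuous linear map in the matrix argument
noncomputable def mulVecCLM {n : ℕ} (v : Fin n → ℂ) :
    Matrix (Fin n) (Fin n) ℂ →L[ℂ] (Fin n → ℂ) :=
  LinearMap.toContinuousLinearMap
    { toFun := fun X => X *ᵥ v
      map_add' := fun X Y => Matrix.add_mulVec X Y v
      map_smul' := fun c X => smul_mulVec c X v }

lemma exp_mulVec_nilpotent {n : ℕ} (M : Matrix (Fin n) (Fin n) ℂ) (v : Fin n → ℂ)
    (N : ℕ) (h : M ^ N *ᵥ v = 0) :
    exp M *ᵥ v = ∑ k ∈ Finset.range N, (k.factorial : ℂ)⁻¹ • (M ^ k *ᵥ v) := by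
  have hs : HasSum (fun k : ℕ => (k.factorial : ℂ)⁻¹ • M ^ k) (exp M) := by
    rw [exp_eq_tsum ℂ]
    exact (expSeries_summable' M).hasSum
  have hs2 := (mulVecCLM v).hasSum hs
  have hval : ∀ k, (mulVecCLM v) ((k.factorial : ℂ)⁻¹ • M ^ k)
      = (k.factorial : ℂ)⁻¹ • (M ^ k *ᵥ v) := fun k => by
    simp [mulVecCLM, LinearMap.toContinuousLinearMap]
  have hzero : ∀ k ∉ Finset.range N, (k.factorial : ℂ)⁻¹ • (M ^ k *ᵥ v) = 0 := by
    intro k hk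
    rw [Finset.mem_range, not_lt] at hk
    have : M ^ k *ᵥ v = 0 := by
      rw [← Nat.sub_add_cancel hk, pow_add, ← Matrix.mulVec_mulVec, h, Matrix.mulVec_zero]
    rw [this, smul_zero]
  have hs3 : HasSum (fun k => (k.factorial : ℂ)⁻¹ • (M ^ k *ᵥ v)) (exp M *ᵥ v) :=
    hs2.congr_fun fun k => (hval k).symm
  exact hs3.unique (hasSum_sum_of_ne_finset_zero hzero)

lemma decay_gen_eigenvector {n : ℕ} (B : Matrix (Fin n) (Fin n) ℂ) {μ : ℂ} (hμ : μ.re < 0)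
    (u : Fin n → ℂ) (N : ℕ) (hu : (B - μ • 1) ^ N *ᵥ u = 0) :
    Tendsto (fun t : ℝ => exp ((t : ℂ) • B) *ᵥ u) atTop (nhds 0) := by
  have key : ∀ t : ℝ, exp ((t : ℂ) • B) *ᵥ u
      = Complex.exp ((t : ℂ) * μ) •
        ∑ k ∈ Finset.range N, (k.factorial : ℂ)⁻¹ • ((t : ℂ) ^ k • ((B - μ • 1) ^ k *ᵥ u)) := by
    intro t
    have hsplit : (t : ℂ) • B = ((t : ℂ) * μ) • (1 : Matrix (Fin n) (Fin n) ℂ)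
        + (t : ℂ) • (B - μ • (1 : Matrix (Fin n) (Fin n) ℂ)) := by
      rw [smul_sub, smul_smul]; abel
    have hcomm : Commute (((t : ℂ) * μ) • (1 : Matrix (Fin n) (Fin n) ℂ))
        ((t : ℂ) • (B - μ • 1)) := by
      simpa using (Commute.one_left ((t : ℂ) • (B - μ • 1))).smul_left ((t:ℂ)*μ)
    have h1 : exp (((t : ℂ) * μ) • (1 : Matrix (Fin n) (Fin n) ℂ))
        = Complex.exp ((t : ℂ) * μ) • (1 : Matrix (Fin n) (Fin n) ℂ) := by
      rw [← Algebra.algebraMap_eq_smul_one, ← Algebra.algebraMap_eq_smul_one, Complex.exp_eq_exp_ℂ]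
      exact (algebraMap_exp_comm _).symm
    have hnil : ((t : ℂ) • (B - μ • 1)) ^ N *ᵥ u = 0 := by
      rw [smul_pow, Matrix.smul_mulVec, hu, smul_zero]
    rw [hsplit, Matrix.exp_add_of_commute _ _ hcomm, h1, smul_mul_assoc, one_mul,
      Matrix.smul_mulVec, exp_mulVec_nilpotent _ _ N hnil]
    congr 1
    refine Finset.sum_congr rfl fun k _ => ?_
    rw [smul_pow, Matrix.smul_mulVec]
  have hb : ∀ᶠ t : ℝ in atTop, ‖exp ((t : ℂ) • B) *ᵥ u‖
      ≤ ∑ k ∈ Finset.range N,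
          (k.factorial : ℝ)⁻¹ * ‖(B - μ • 1) ^ k *ᵥ u‖ * (Real.exp (μ.re * t) * t ^ k) := by
    filter_upwards [eventually_ge_atTop (0:ℝ)] with t ht
    rw [key t]
    rw [norm_smul]
    have habs : ‖Complex.exp ((t : ℂ) * μ)‖ = Real.exp (μ.re * t) := by
      rw [Complex.norm_exp]; congr 1
      simp [mul_comm]
    rw [habs]
    calc Real.exp (μ.re * t) * ‖∑ k ∈ Finset.range N,
          (k.factorial : ℂ)⁻¹ • ((t : ℂ) ^ k • ((B - μ • 1) ^ k *ᵥ u))‖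
        ≤ Real.exp (μ.re * t) * ∑ k ∈ Finset.range N,
          (k.factorial : ℝ)⁻¹ * (t ^ k * ‖(B - μ • 1) ^ k *ᵥ u‖) := by
          refine mul_le_mul_of_nonneg_left ?_ (Real.exp_pos _).le
          refine (norm_sum_le _ _).trans (le_of_eq ?_)
          refine Finset.sum_congr rfl fun k _ => ?_
          rw [norm_smul, norm_smul, norm_pow]
          simp [abs_of_nonneg ht, Real.norm_eq_abs, abs_of_nonneg ht]
      _ = ∑ k ∈ Finset.range N,
          (k.factorial : ℝ)⁻¹ * ‖(B - μ • 1) ^ k *ᵥ u‖ * (Real.exp (μ.re * t) * t ^ k) := by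
          rw [Finset.mul_sum]; refine Finset.sum_congr rfl fun k _ => by ring
  have hlim : Tendsto (fun t : ℝ => ∑ k ∈ Finset.range N,
      (k.factorial : ℝ)⁻¹ * ‖(B - μ • 1) ^ k *ᵥ u‖ * (Real.exp (μ.re * t) * t ^ k))
      atTop (nhds 0) := by
    have : Tendsto (fun t : ℝ => ∑ k ∈ Finset.range N,
        (k.factorial : ℝ)⁻¹ * ‖(B - μ • 1) ^ k *ᵥ u‖ * (Real.exp (μ.re * t) * t ^ k))
        atTop (nhds (∑ k ∈ Finset.range N, (k.factorial : ℝ)⁻¹ * ‖(B - μ • 1) ^ k *ᵥ u‖ * 0)) :=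
      tendsto_finset_sum _ fun k _ => (aux_exp_pow hμ k).const_mul _
    simpa using this
  exact squeeze_zero_norm' hb hlim

lemma hurwitz_mulVec_tendsto {n : ℕ} (B : Matrix (Fin n) (Fin n) ℂ)
    (hB : ∀ μ ∈ spectrum ℂ B, μ.re < 0) (v : Fin n → ℂ) :
    Tendsto (fun t : ℝ => exp ((t : ℂ) • B) *ᵥ v) atTop (nhds 0) := by
  set f : Module.End ℂ (Fin n → ℂ) := Matrix.toLinAlgEquiv' B with hf
  have htop : ⨆ μ : ℂ, f.maxGenEigenspace μ = ⊤ :=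
    Module.End.iSup_maxGenEigenspace_eq_top f
  have hv : v ∈ ⨆ μ : ℂ, f.maxGenEigenspace μ := htop ▸ Submodule.mem_top
  rw [Submodule.mem_iSup_iff_exists_finsupp] at hv
  obtain ⟨c, hc, hsum⟩ := hv
  -- reduce to each component
  have hdecomp : ∀ t : ℝ, exp ((t : ℂ) • B) *ᵥ v
      = ∑ μ ∈ c.support, exp ((t : ℂ) • B) *ᵥ (c μ) := by
    intro t
    rw [← hsum, Finsupp.sum, ← Matrix.mulVecLin_apply, map_sum]
    simp [Matrix.mulVecLin_apply]
  have hcomp : ∀ μ ∈ c.support,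
      Tendsto (fun t : ℝ => exp ((t : ℂ) • B) *ᵥ (c μ)) atTop (nhds 0) := by
    intro μ hμs
    have hmem := hc μ
    rw [Module.End.mem_maxGenEigenspace] at hmem
    obtain ⟨k, hk⟩ := hmem
    have hk' : (B - μ • 1) ^ k *ᵥ (c μ) = 0 := by
      have e : f - μ • 1 = Matrix.toLinAlgEquiv' (B - μ • 1) := by
        rw [hf, map_sub, _root_.map_smul, _root_.map_one]
      rw [e, ← map_pow] at hk
      rw [show ((Matrix.toLinAlgEquiv' ((B - μ • 1) ^ k)) (c μ)) = (B - μ • 1) ^ k *ᵥ (c μ) from rfl] at hk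
      exact hk
    -- μ is an eigenvalue, hence in the spectrum
    have hne : c μ ≠ 0 := Finsupp.mem_support_iff.mp hμs
    have heig : f.HasEigenvalue μ := by
      refine Module.End.hasEigenvalue_of_hasGenEigenvalue (k := k) ?_
      have hne' : f.genEigenspace μ k ≠ ⊥ := by
        rw [Submodule.ne_bot_iff]
        exact ⟨c μ, Module.End.mem_genEigenspace_nat.mpr hk, hne⟩
      exact hne'
    have hspec : μ ∈ spectrum ℂ B := by
      rw [← AlgEquiv.spectrum_eq (Matrix.toLinAlgEquiv' (R := ℂ) (n := Fin n)) B]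
      exact Module.End.hasEigenvalue_iff_mem_spectrum.mp heig
    exact decay_gen_eigenvector B (hB μ hspec) (c μ) k hk'
  have := tendsto_finset_sum c.support (fun μ hμs => hcomp μ hμs)
  rw [Finset.sum_const_zero] at this
  exact Tendsto.congr (fun t => (hdecomp t).symm) this

lemma exp_map_complex {n : ℕ} (M : Matrix (Fin n) (Fin n) ℝ) :
    (exp M).map (algebraMap ℝ ℂ) = exp (M.map (algebraMap ℝ ℂ)) := by
  set φ : Matrix (Fin n) (Fin n) ℝ →ₐ[ℝ] Matrix (Fin n) (Fin n) ℂ :=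
    (Algebra.ofId ℝ ℂ).mapMatrix with hφ
  have hcont : Continuous φ := φ.toLinearMap.continuous_of_finiteDimensional
  have h1 : φ (exp M) = exp (φ M) := map_exp φ hcont M
  have h2 : (exp : Matrix (Fin n) (Fin n) ℂ → _) = exp := rfl
  calc (exp M).map (algebraMap ℝ ℂ) = φ (exp M) := rfl
    _ = exp (φ M) := h1
    _ = exp (M.map (algebraMap ℝ ℂ)) := by rw [h2]; rfl

lemma hurwitz_real_mulVec_tendsto {n : ℕ} (A : Matrix (Fin n) (Fin n) ℝ)
    (hA : ∀ μ ∈ spectrum ℂ (A.map (algebraMap ℝ ℂ)), μ.re < 0) (v : Fin n → ℝ) :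
    Tendsto (fun t : ℝ => exp (t • A) *ᵥ v) atTop (nhds 0) := by
  set B := A.map (algebraMap ℝ ℂ) with hB
  set vc : Fin n → ℂ := fun i => (v i : ℂ) with hvc
  have key : ∀ (t : ℝ) (i : Fin n),
      (((exp (t • A) *ᵥ v) i : ℝ) : ℂ) = (exp ((t : ℂ) • B) *ᵥ vc) i := by
    intro t i
    have hmap : (exp (t • A)).map (algebraMap ℝ ℂ) = exp ((t : ℂ) • B) := by
      rw [exp_map_complex]
      congr 1
      ext i j
      simp [hB, Matrix.smul_apply, Complex.ofReal_mul]
    calc (((exp (t • A) *ᵥ v) i : ℝ) : ℂ)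
        = ∑ j, ((exp (t • A)) i j : ℂ) * (v j : ℂ) := by
          simp [Matrix.mulVec, dotProduct, Complex.ofReal_sum]
      _ = (((exp (t • A)).map (algebraMap ℝ ℂ)) *ᵥ vc) i := by
          simp [Matrix.mulVec, dotProduct, Matrix.map_apply, hvc, Complex.coe_algebraMap]
      _ = (exp ((t : ℂ) • B) *ᵥ vc) i := by rw [hmap]
  have hc := hurwitz_mulVec_tendsto B hA vc
  rw [tendsto_pi_nhds]
  intro i
  have hci : Tendsto (fun t : ℝ => (exp ((t : ℂ) • B) *ᵥ vc) i) atTop (nhds 0) := by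
    have := tendsto_pi_nhds.mp hc i
    simpa using this
  have hre := (Complex.continuous_re.tendsto 0).comp hci
  simp only [Complex.zero_re] at hre
  refine hre.congr fun t => ?_
  simp only [Function.comp_apply, ← key t i, Complex.ofReal_re]

lemma spectrum_transpose {n : ℕ} (B : Matrix (Fin n) (Fin n) ℂ) :
    spectrum ℂ Bᵀ = spectrum ℂ B := by
  ext μ
  simp only [spectrum.mem_iff]
  have h : algebraMap ℂ (Matrix (Fin n) (Fin n) ℂ) μ - Bᵀ
      = (algebraMap ℂ (Matrix (Fin n) (Fin n) ℂ) μ - B)ᵀ := by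
    rw [Matrix.transpose_sub]
    congr 1
    rw [Matrix.algebraMap_eq_diagonal, Matrix.diagonal_transpose]
  simp only [h, Matrix.isUnit_iff_isUnit_det, Matrix.det_transpose]


/-- Comparison principle for the Lyapunov inequality: if `A` is Hurwitz, `Q` is symmetric,
`P` satisfies `A P + P Aᵀ + Q ⪯ 0` and `P₀` satisfies `A P₀ + P₀ Aᵀ + Q = 0`,
then `P − P₀` is positive semidefinite. -/
theorem lyapunov_comparison {n : ℕ} (A Q P P₀ : Matrix (Fin n) (Fin n) ℝ)
    (hA : ∀ μ ∈ spectrum ℂ (A.map (algebraMap ℝ ℂ)), μ.re < 0)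
    (hQ : Q.IsSymm) (hP : P.IsSymm) (hP₀ : P₀.IsSymm)
    (hineq : (-(A * P + P * Aᵀ + Q)).PosSemidef)
    (heq : A * P₀ + P₀ * Aᵀ + Q = 0) : (P - P₀).PosSemidef := by
  classical
  set D := P - P₀ with hD
  set C := -(A * P + P * Aᵀ + Q) with hC
  have hDsymm : D.IsSymm := by
    rw [Matrix.IsSymm, hD, Matrix.transpose_sub, hP, hP₀]
  have hlyap : A * D + D * Aᵀ = -C := by
    have h0 : A * P₀ + P₀ * Aᵀ = -Q := by
      have h := heq
      rw [add_eq_zero_iff_eq_neg] at h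
      exact h
    rw [hD, hC]
    rw [Matrix.mul_sub, Matrix.sub_mul]
    have : A * P - A * P₀ + (P * Aᵀ - P₀ * Aᵀ) = (A * P + P * Aᵀ) - (A * P₀ + P₀ * Aᵀ) := by abel
    rw [this, h0, neg_neg]
    abel
  rw [Matrix.posSemidef_iff_dotProduct_mulVec]
  constructor
  · rw [Matrix.IsHermitian]
    ext i j
    simpa using (congrFun (congrFun hDsymm j) i).symm
  intro x
  -- setup
  set E : ℝ → Matrix (Fin n) (Fin n) ℝ := fun t => exp (t • A) with hE
  set F : ℝ → Matrix (Fin n) (Fin n) ℝ := fun t => exp (t • Aᵀ) with hF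
  have hFE : ∀ t, F t = (E t)ᵀ := by
    intro t
    rw [hF, hE]
    simp only
    rw [← Matrix.transpose_smul, Matrix.exp_transpose]
  set M : ℝ → Matrix (Fin n) (Fin n) ℝ := fun t => E t * D * F t with hM
  set L : Matrix (Fin n) (Fin n) ℝ →L[ℝ] ℝ :=
    LinearMap.toContinuousLinearMap
      { toFun := fun X => x ⬝ᵥ (X *ᵥ x)
        map_add' := fun X Y => by
          simp only [Matrix.add_mulVec, dotProduct_add]
        map_smul' := fun c X => by
          simp only [Matrix.smul_mulVec, dotProduct_smul, RingHom.id_apply,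
            smul_eq_mul] } with hL
  set g : ℝ → ℝ := fun t => x ⬝ᵥ (M t *ᵥ x) with hg
  -- derivative of M
  have hcommE : ∀ t, A * E t = E t * A := fun t =>
    ((Commute.refl A).smul_right t).exp_right |>.eq
  have hcommF : ∀ t, Aᵀ * F t = F t * Aᵀ := fun t =>
    ((Commute.refl Aᵀ).smul_right t).exp_right |>.eq
  have hMd : ∀ t, HasDerivAt M (E t * (A * D + D * Aᵀ) * F t) t := by
    intro t
    have hEd : HasDerivAt E (A * E t) t := hasDerivAt_exp_smul_const' A t
    have hFd : HasDerivAt F (F t * Aᵀ) t := hasDerivAt_exp_smul_const Aᵀ t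
    have h1 := (hEd.mul_const D).mul hFd
    convert h1 using 1
    case e'_4 | e'_5 | e'_6 | e'_8 => rfl
    calc E t * (A * D + D * Aᵀ) * F t
        = (E t * A) * D * F t + E t * D * (Aᵀ * F t) := by noncomm_ring
      _ = A * E t * D * F t + E t * D * (F t * Aᵀ) := by rw [← hcommE t, hcommF t]
  -- derivative of g
  have hgd : ∀ t, HasDerivAt g (L (E t * (A * D + D * Aᵀ) * F t)) t := by
    intro t
    have := (L.hasFDerivAt (x := M t)).comp_hasDerivAt t (hMd t)
    exact this
  -- rewrite quadratic forms
  have hquad : ∀ (X : Matrix (Fin n) (Fin n) ℝ) (t : ℝ),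
      x ⬝ᵥ ((E t * X * F t) *ᵥ x) = (F t *ᵥ x) ⬝ᵥ (X *ᵥ (F t *ᵥ x)) := by
    intro X t
    rw [← Matrix.mulVec_mulVec, ← Matrix.mulVec_mulVec, dotProduct_mulVec x (E t),
      hFE t, ← Matrix.transpose_transpose (E t), Matrix.vecMul_transpose,
      Matrix.transpose_transpose]
  -- deriv nonpos
  have hderiv_eq : ∀ t, L (E t * (A * D + D * Aᵀ) * F t)
      = -((F t *ᵥ x) ⬝ᵥ (C *ᵥ (F t *ᵥ x))) := by
    intro t
    have hLval : ∀ X, L X = x ⬝ᵥ (X *ᵥ x) := fun X => rfl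
    rw [hLval, hlyap]
    have : E t * (-C) * F t = -(E t * C * F t) := by noncomm_ring
    rw [this, Matrix.neg_mulVec, dotProduct_neg, hquad]
  have hCpos : ∀ y : Fin n → ℝ, 0 ≤ y ⬝ᵥ (C *ᵥ y) := by
    intro y
    have := hineq.dotProduct_mulVec_nonneg y
    simpa using this
  have hgmono : Antitone g := by
    apply antitone_of_deriv_nonpos
    · exact fun t => (hgd t).differentiableAt
    · intro t
      rw [(hgd t).deriv, hderiv_eq t]
      simpa using hCpos (F t *ᵥ x)
  -- limit of g
  have hATspec : ∀ μ ∈ spectrum ℂ (Aᵀ.map (algebraMap ℝ ℂ)), μ.re < 0 := by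
    intro μ hμ
    apply hA μ
    rwa [Matrix.transpose_map, spectrum_transpose] at hμ
  have hw : Tendsto (fun t : ℝ => F t *ᵥ x) atTop (nhds 0) :=
    hurwitz_real_mulVec_tendsto Aᵀ hATspec x
  have hq : Continuous (fun y : Fin n → ℝ => y ⬝ᵥ (D *ᵥ y)) := by
    have : (fun y : Fin n → ℝ => y ⬝ᵥ (D *ᵥ y))
        = fun y => ∑ i, y i * ∑ j, D i j * y j := rfl
    rw [this]
    exact continuous_finset_sum _ fun i _ =>
      (continuous_apply i).mul (continuous_finset_sum _ fun j _ =>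
        (continuous_const.mul (continuous_apply j)))
  have hglim : Tendsto g atTop (nhds 0) := by
    have h1 := (hq.tendsto 0).comp hw
    simp only [Matrix.mulVec_zero, dotProduct_zero] at h1
    refine h1.congr fun t => ?_
    simp only [Function.comp_apply]
    exact (hquad D t).symm
  -- conclude
  have h0le : (0 : ℝ) ≤ g 0 :=
    le_of_tendsto hglim (eventually_atTop.mpr ⟨0, fun t ht => hgmono ht⟩)
  have hg0 : g 0 = x ⬝ᵥ (D *ᵥ x) := by
    rw [hg]
    simp only [hM, hE, hF, zero_smul, exp_zero, Matrix.one_mul, Matrix.mul_one]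
  simpa using hg0 ▸ h0le
end
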